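/- In the two-ISP game with side payment p_d, the equilibrium expected utilities are E[U_1] = α E[(D(θ)/(2α) + β E[D(θ)]/(2α(2α-β)) - p_d(2α² - β²)/(4α² - β²))²] and E[U_2] = α (E[D(θ)]/(2α - β) + αβ p_d/(4α² - β²))². -/

import Mathlib

/-- In the side-payment game at the equilibrium prices
p₁(θ) = D(θ)/(2α) + βE[D]/(2α(2α-β)) + 2α²p_d/(4α²-β²),
p₂ = E[D]/(2α-β) + αβp_d/(4α²-β²), the equilibrium expected utilities are
E[U₁] = α·E[(D(θ)/(2α) + βE[D]/(2α(2α-β)) - p_d(2α²-β²)/(4α²-β²))²] and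
E[U₂] = α·(E[D]/(2α-β) + αβp_d/(4α²-β²))². -/
theorem stmt8 {Θ : Type*} [Fintype Θ] (P D : Θ → ℝ)
    (hP : ∀ θ, 0 ≤ P θ) (hPsum : ∑ θ, P θ = 1) (hD : ∀ θ, 0 ≤ D θ)
    (α β pd : ℝ) (hβ : 0 < β) (hαβ : β < α) (hpd : 0 ≤ pd)
    (p₁ : Θ → ℝ) (p₂ : ℝ)
    (hp₁ : ∀ θ, p₁ θ = D θ / (2 * α) +
        β * (∑ θ', P θ' * D θ') / (2 * α * (2 * α - β)) +
        2 * α ^ 2 * pd / (4 * α ^ 2 - β ^ 2))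
    (hp₂ : p₂ = (∑ θ', P θ' * D θ') / (2 * α - β) +
        α * β * pd / (4 * α ^ 2 - β ^ 2)) :
    (∑ θ, P θ * ((D θ - α * p₁ θ + β * p₂) * (p₁ θ - pd)) =
      α * ∑ θ, P θ *
        (D θ / (2 * α) + β * (∑ θ', P θ' * D θ') / (2 * α * (2 * α - β)) -
          pd * (2 * α ^ 2 - β ^ 2) / (4 * α ^ 2 - β ^ 2)) ^ 2) ∧
    (∑ θ, P θ * ((D θ - α * p₂ + β * p₁ θ) * p₂) =
      α * ((∑ θ', P θ' * D θ') / (2 * α - β) +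
        α * β * pd / (4 * α ^ 2 - β ^ 2)) ^ 2) := by
  have hα : 0 < α := hβ.trans hαβ
  have h1 : (2 : ℝ) * α ≠ 0 := by positivity
  have h2 : 2 * α - β ≠ 0 := by nlinarith
  have h3 : 4 * α ^ 2 - β ^ 2 ≠ 0 := by nlinarith
  set M : ℝ := ∑ θ', P θ' * D θ' with hM
  constructor
  · rw [Finset.mul_sum]
    refine Finset.sum_congr rfl fun θ _ => ?_
    rw [hp₁, hp₂]
    have h2' : α * 2 - β ≠ 0 := by rwa [mul_comm]
    have h3' : α ^ 2 * 4 - β ^ 2 ≠ 0 := by rwa [mul_comm]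
    field_simp
    ring
  · have key : ∀ θ, (D θ - α * p₂ + β * p₁ θ) * p₂ =
        D θ * ((1 + β / (2 * α)) * p₂) +
        (- α * p₂ + β * (β * M / (2 * α * (2 * α - β)) +
          2 * α ^ 2 * pd / (4 * α ^ 2 - β ^ 2))) * p₂ := by
      intro θ
      rw [hp₁]
      field_simp
      ring
    simp_rw [key, mul_add, Finset.sum_add_distrib, ← mul_assoc,
      ← Finset.sum_mul, hPsum, ← hM]
    rw [hp₂]
    field_simp
    ring
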